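/- If Ω and Θ are domains in M with Θ ⊆ Ω, no connected component of M \ Ω is compact, and no connected component of Ω \ Θ is compact, then no connected component of M \ Θ is compact. -/

import Mathlib

open Set

/-- An *end* of a topological space `M`: a connected component with noncompact closure
of the complement of some compact set. -/
def IsEnd {M : Type*} [TopologicalSpace M] (E : Set M) : Prop :=
  ∃ K : Set M, IsCompact K ∧ (∃ x ∈ Kᶜ, E = connectedComponentIn Kᶜ x) ∧
    ¬ IsCompact (closure E)

/-- A *domain* in `M`: a nonempty connected open subset. -/
def IsDomainSet {M : Type*} [TopologicalSpace M] (Ω : Set M) : Prop :=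
  IsOpen Ω ∧ IsConnected Ω

/-- `M \ K = E 0 ∪ ⋯ ∪ E (m-1)` is an *ends decomposition*: `K` is compact and the `E j`
are the distinct connected components of `M \ K`, each with noncompact closure. -/
def IsEndsDecomposition {M : Type*} [TopologicalSpace M] (K : Set M)
    {m : ℕ} (E : Fin m → Set M) : Prop :=
  IsCompact K ∧ Function.Injective E ∧
    (∀ j, (∃ x ∈ Kᶜ, E j = connectedComponentIn Kᶜ x) ∧ ¬ IsCompact (closure (E j))) ∧
    (⋃ j, E j) = Kᶜ


lemma isClosed_connectedComponentIn_of_isClosed {M : Type*} [TopologicalSpace M]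
    {s : Set M} (hs : IsClosed s) (x : M) : IsClosed (connectedComponentIn s x) := by
  by_cases hx : x ∈ s
  · apply isClosed_of_closure_subset
    exact isPreconnected_connectedComponentIn.closure.subset_connectedComponentIn
      (subset_closure (mem_connectedComponentIn hx))
      (closure_minimal (connectedComponentIn_subset s x) hs)
  · rw [connectedComponentIn_eq_empty hx]; exact isClosed_empty

/-- If `Θ ⊆ Ω` are domains in `M`, no connected component of `M \ Ω` is compact, and no
connected component of `Ω \ Θ` is compact, then no connected component of `M \ Θ` is
compact. -/
theorem no_compact_components_of_complement
    {n : ℕ} {M : Type*} [TopologicalSpace M]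
    [ChartedSpace (EuclideanSpace ℝ (Fin n)) M]
    [IsManifold (modelWithCornersSelf ℝ (EuclideanSpace ℝ (Fin n))) (⊤ : ℕ∞) M]
    [T2Space M] [SecondCountableTopology M] [ConnectedSpace M] [NoncompactSpace M]
    (Ω Θ : Set M) (hΩ : IsDomainSet Ω) (hΘ : IsDomainSet Θ) (hsub : Θ ⊆ Ω)
    (h₁ : ∀ x ∈ Ωᶜ, ¬ IsCompact (connectedComponentIn Ωᶜ x))
    (h₂ : ∀ x ∈ Ω \ Θ, ¬ IsCompact (connectedComponentIn (Ω \ Θ) x)) :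
    ∀ x ∈ Θᶜ, ¬ IsCompact (connectedComponentIn Θᶜ x) := by
  intro x hx hC
  have hΘc : IsClosed Θᶜ := hΘ.1.isClosed_compl
  have hΩc : IsClosed Ωᶜ := hΩ.1.isClosed_compl
  have hCc : IsClosed (connectedComponentIn Θᶜ x) := hC.isClosed
  by_cases hxΩ : x ∈ Ω
  · -- x ∈ Ω \ Θ
    have hxd : x ∈ Ω \ Θ := ⟨hxΩ, hx⟩
    set D := connectedComponentIn (Ω \ Θ) x with hD
    have hDC : D ⊆ connectedComponentIn Θᶜ x :=
      connectedComponentIn_mono x (fun y hy => hy.2)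
    by_cases hcl : closure D ⊆ Ω \ Θ
    · have hDcl : IsClosed D := by
        apply isClosed_of_closure_subset
        exact isPreconnected_connectedComponentIn.closure.subset_connectedComponentIn
          (subset_closure (mem_connectedComponentIn hxd)) hcl
      exact h₂ x hxd (hC.of_isClosed_subset hDcl hDC)
    · obtain ⟨y, hyD, hy⟩ := not_subset.mp hcl
      have hyC : y ∈ connectedComponentIn Θᶜ x :=
        closure_minimal hDC hCc hyD
      have hyΘc : y ∈ Θᶜ := connectedComponentIn_subset _ _ hyC
      have hyΩc : y ∈ Ωᶜ := fun h => hy ⟨h, hyΘc⟩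
      have hsub' : connectedComponentIn Ωᶜ y ⊆ connectedComponentIn Θᶜ x := by
        rw [connectedComponentIn_eq hyC]
        exact connectedComponentIn_mono y (compl_subset_compl.mpr hsub)
      exact h₁ y hyΩc (hC.of_isClosed_subset
        (isClosed_connectedComponentIn_of_isClosed hΩc y) hsub')
  · have hsub' : connectedComponentIn Ωᶜ x ⊆ connectedComponentIn Θᶜ x :=
      connectedComponentIn_mono x (compl_subset_compl.mpr hsub)
    exact h₁ x hxΩ (hC.of_isClosed_subset
      (isClosed_connectedComponentIn_of_isClosed hΩc x) hsub')
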